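/- Let p : (0,∞) → ℝ be differentiable and c > 0 a constant with 0 < (5/3)·p(Z) − Z·p′(Z) < c·Z for all Z > 0; let S : (0,∞) → ℝ be differentiable with S′(Z) = −(3/2)·((5/3)p(Z) − Z p′(Z))/Z² and S(Z) → 0 as Z → ∞; let a > 0 and define s(ρ,θ) := S(ρθ^{−3/2}) + (4a/3)θ³/ρ for ρ, θ > 0. Then for every compact set K = [ρ₀′,ρ₁′] × [θ₀′,θ₁′] ⊂ (0,∞)² there exists a constant c̃ > 0 such that ρ·|s(ρ,θ) − s(ρ′,θ′)| ≤ c̃·(ρ + ρ·max(0, log θ) + ρ·|log ρ| + θ³) for all ρ, θ > 0 and all (ρ′,θ′) ∈ K. -/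

import Mathlib

set_option maxHeartbeats 1600000


/-- the total entropy `s(ρ,θ) = S(ρθ^(−3/2)) + (4a/3)θ³/ρ` (molecular
plus radiation part), where `S′(Z) = −(3/2)((5/3)p(Z) − Z p′(Z))/Z²`,
`0 < (5/3)p(Z) − Z p′(Z) < cZ` and `S(Z) → 0` at infinity, satisfies: for every
compact set `K = [ρ₀′,ρ₁′] × [θ₀′,θ₁′] ⊂ (0,∞)²` there is `ctil > 0` with
`ρ·|s(ρ,θ) − s(ρ′,θ′)| ≤ ctil·(ρ + ρ·max(0, log θ) + ρ·|log ρ| + θ³)`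
for all `ρ, θ > 0` and all `(ρ′,θ′) ∈ K`. -/
theorem entropy_difference_residual_bound (p p' S S' : ℝ → ℝ) (c : ℝ) (hc : 0 < c)
    (hp : ∀ Z : ℝ, 0 < Z → HasDerivAt p (p' Z) Z)
    (hstab : ∀ Z : ℝ, 0 < Z →
      0 < (5 / 3) * p Z - Z * p' Z ∧ (5 / 3) * p Z - Z * p' Z < c * Z)
    (hS : ∀ Z : ℝ, 0 < Z → HasDerivAt S (S' Z) Z)
    (hS' : ∀ Z : ℝ, 0 < Z → S' Z = -(3 / 2) * ((5 / 3) * p Z - Z * p' Z) / Z ^ 2)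
    (hlim : Filter.Tendsto S Filter.atTop (nhds 0))
    (a : ℝ) (ha : 0 < a)
    (ρ₀' ρ₁' θ₀' θ₁' : ℝ) (hρ₀ : 0 < ρ₀') (hρ₁ : ρ₀' ≤ ρ₁') (hθ₀ : 0 < θ₀') (hθ₁ : θ₀' ≤ θ₁') :
    ∃ ctil : ℝ, 0 < ctil ∧
      ∀ ρ θ ρ' θ' : ℝ, 0 < ρ → 0 < θ →
        ρ' ∈ Set.Icc ρ₀' ρ₁' → θ' ∈ Set.Icc θ₀' θ₁' →
        ρ * |(S (ρ * θ ^ (-(3 : ℝ) / 2)) + (4 * a / 3) * θ ^ 3 / ρ) -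
              (S (ρ' * θ' ^ (-(3 : ℝ) / 2)) + (4 * a / 3) * θ' ^ 3 / ρ')| ≤
          ctil * (ρ + ρ * max 0 (Real.log θ) + ρ * |Real.log ρ| + θ ^ 3) := by
  -- derivative bounds for S
  have hSd : ∀ Z : ℝ, 0 < Z → S' Z < 0 ∧ -(3 * c / 2) / Z < S' Z := by
    intro Z hZ
    obtain ⟨h1, h2⟩ := hstab Z hZ
    rw [hS' Z hZ]
    constructor
    · apply div_neg_of_neg_of_pos
      · nlinarith
      · positivity
    · rw [div_lt_div_iff₀ hZ (by positivity)]
      nlinarith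
  -- S is antitone on (0, ∞)
  have hanti : AntitoneOn S (Set.Ioi 0) := by
    apply antitoneOn_of_deriv_nonpos (convex_Ioi 0)
    · intro x hx
      exact (hS x hx).continuousAt.continuousWithinAt
    · intro x hx
      rw [interior_Ioi] at hx
      exact (hS x hx).differentiableAt.differentiableWithinAt
    · intro x hx
      rw [interior_Ioi] at hx
      rw [(hS x hx).deriv]
      exact le_of_lt (hSd x hx).1
  -- S is nonnegative on (0, ∞)
  have hS0 : ∀ Z : ℝ, 0 < Z → 0 ≤ S Z := by
    intro Z hZ
    refine le_of_tendsto hlim ?_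
    filter_upwards [Filter.eventually_ge_atTop Z] with y hy
    exact hanti hZ (lt_of_lt_of_le hZ hy) hy
  -- g(Z) = S Z + (3c/2) log Z is monotone on (0,∞)
  have hgmono : MonotoneOn (fun Z => S Z + 3 * c / 2 * Real.log Z) (Set.Ioi 0) := by
    apply monotoneOn_of_deriv_nonneg (convex_Ioi 0)
    · intro x hx
      exact ((hS x hx).add ((Real.hasDerivAt_log (ne_of_gt hx)).const_mul
        (3 * c / 2))).continuousAt.continuousWithinAt
    · intro x hx
      rw [interior_Ioi] at hx
      exact ((hS x hx).add ((Real.hasDerivAt_log (ne_of_gt hx)).const_mul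
        (3 * c / 2))).differentiableAt.differentiableWithinAt
    · intro x hx
      rw [interior_Ioi] at hx
      have hgd : HasDerivAt (fun Z => S Z + 3 * c / 2 * Real.log Z) (S' x + 3 * c / 2 * x⁻¹) x :=
        (hS x hx).add ((Real.hasDerivAt_log (ne_of_gt hx)).const_mul (3 * c / 2))
      rw [hgd.deriv]
      have := (hSd x hx).2
      have hx' : (0:ℝ) < x := hx
      rw [div_lt_iff₀ hx'] at this
      have : -(3 * c / 2) < S' x * x := this
      have hxi : 3 * c / 2 * x⁻¹ = (3 * c / 2) / x := by ring
      rw [hxi, ← sub_nonneg]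
      have : 0 < S' x * x + 3 * c / 2 := by linarith
      have h2 : 0 < (S' x * x + 3 * c / 2) / x := div_pos this hx'
      have h3 : (S' x * x + 3 * c / 2) / x = S' x + 3 * c / 2 / x := by
        field_simp
      linarith [h3 ▸ h2]
  -- upper bound for S
  have hSup : ∀ Z : ℝ, 0 < Z → S Z ≤ S 1 + 3 * c / 2 * max 0 (-Real.log Z) := by
    intro Z hZ
    rcases le_total 1 Z with h1 | h1
    · have := hanti (Set.mem_Ioi.2 one_pos) (Set.mem_Ioi.2 hZ) h1
      have hm : (0:ℝ) ≤ max 0 (-Real.log Z) := le_max_left _ _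
      nlinarith
    · have := hgmono (Set.mem_Ioi.2 hZ) (Set.mem_Ioi.2 one_pos) h1
      simp only [Real.log_one, mul_zero, add_zero] at this
      have hlz : Real.log Z ≤ 0 := Real.log_nonpos (le_of_lt hZ) h1
      have hm : max 0 (-Real.log Z) = -Real.log Z := max_eq_right (by linarith)
      rw [hm]; linarith
  -- constants
  set Zmin : ℝ := ρ₀' * θ₁' ^ (-(3:ℝ)/2) with hZmin
  have hθ₁pos : 0 < θ₁' := lt_of_lt_of_le hθ₀ hθ₁
  have hZminpos : 0 < Zmin := by
    apply mul_pos hρ₀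
    exact Real.rpow_pos_of_pos hθ₁pos _
  set C2 : ℝ := S 1 + 3 * c / 2 * |Real.log Zmin| with hC2
  set C3 : ℝ := 4 * a / 3 * θ₁' ^ 3 / ρ₀' with hC3
  have hS1 : 0 ≤ S 1 := hS0 1 one_pos
  have hC2nn : 0 ≤ C2 := by
    have : (0:ℝ) ≤ |Real.log Zmin| := abs_nonneg _
    positivity
  have hC3nn : 0 ≤ C3 := by positivity
  have hlogZminfix : Real.log Zmin = Real.log ρ₀' + (-(3:ℝ)/2) * Real.log θ₁' := by
    rw [hZmin, Real.log_mul (ne_of_gt hρ₀) (ne_of_gt (Real.rpow_pos_of_pos hθ₁pos _)),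
      Real.log_rpow hθ₁pos]
  clear_value Zmin C2 C3
  refine ⟨S 1 + 9 * c / 4 + 3 * c / 2 + C2 + C3 + 4 * a / 3 + 1, by positivity, ?_⟩
  intro ρ θ ρ' θ' hρ hθ hρ' hθ'
  obtain ⟨hρ'l, hρ'u⟩ := hρ'
  obtain ⟨hθ'l, hθ'u⟩ := hθ'
  have hρ'pos : 0 < ρ' := lt_of_lt_of_le hρ₀ hρ'l
  have hθ'pos : 0 < θ' := lt_of_lt_of_le hθ₀ hθ'l
  set Z : ℝ := ρ * θ ^ (-(3:ℝ)/2) with hZdef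
  set Z' : ℝ := ρ' * θ' ^ (-(3:ℝ)/2) with hZ'def
  have hZpos : 0 < Z := mul_pos hρ (Real.rpow_pos_of_pos hθ _)
  have hZ'pos : 0 < Z' := mul_pos hρ'pos (Real.rpow_pos_of_pos hθ'pos _)
  -- log of Z
  have hlogZ : Real.log Z = Real.log ρ + (-(3:ℝ)/2) * Real.log θ := by
    rw [hZdef, Real.log_mul (ne_of_gt hρ) (ne_of_gt (Real.rpow_pos_of_pos hθ _)),
      Real.log_rpow hθ]
  have hlogZ' : Real.log Z' = Real.log ρ' + (-(3:ℝ)/2) * Real.log θ' := by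
    rw [hZ'def, Real.log_mul (ne_of_gt hρ'pos) (ne_of_gt (Real.rpow_pos_of_pos hθ'pos _)),
      Real.log_rpow hθ'pos]
  have hlogZmin := hlogZminfix
  clear_value Z Z'
  -- bound on S Z
  have hmaxZ : max 0 (-Real.log Z) ≤ 3/2 * max 0 (Real.log θ) + |Real.log ρ| := by
    apply max_le
    · have h1 : (0:ℝ) ≤ max 0 (Real.log θ) := le_max_left _ _
      have h2 : (0:ℝ) ≤ |Real.log ρ| := abs_nonneg _
      linarith
    · rw [hlogZ]
      have h1 : Real.log θ ≤ max 0 (Real.log θ) := le_max_right _ _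
      have h2 : -Real.log ρ ≤ |Real.log ρ| := neg_le_abs _
      nlinarith [le_max_left (0:ℝ) (Real.log θ)]
  have hSZ : S Z ≤ S 1 + 3 * c / 2 * (3/2 * max 0 (Real.log θ) + |Real.log ρ|) := by
    have := hSup Z hZpos
    have hmul : 3 * c / 2 * max 0 (-Real.log Z) ≤
        3 * c / 2 * (3/2 * max 0 (Real.log θ) + |Real.log ρ|) := by
      apply mul_le_mul_of_nonneg_left hmaxZ (by positivity)
    linarith
  -- bound on S Z'
  have hSZ' : S Z' ≤ C2 := by
    have hlog : Real.log Zmin ≤ Real.log Z' := by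
      rw [hlogZ', hlogZmin]
      have h1 : Real.log ρ₀' ≤ Real.log ρ' := Real.log_le_log hρ₀ hρ'l
      have h2 : Real.log θ' ≤ Real.log θ₁' := Real.log_le_log hθ'pos hθ'u
      linarith only [h1, h2]
    have hmax : max 0 (-Real.log Z') ≤ |Real.log Zmin| := by
      apply max_le (abs_nonneg _)
      have : -Real.log Z' ≤ -Real.log Zmin := by linarith
      exact le_trans this (neg_le_abs _)
    have := hSup Z' hZ'pos
    have hmul : 3 * c / 2 * max 0 (-Real.log Z') ≤ 3 * c / 2 * |Real.log Zmin| :=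
      mul_le_mul_of_nonneg_left hmax (by positivity)
    rw [hC2]; linarith
  -- bound on radiation term at (ρ', θ')
  have hrad' : 4 * a / 3 * θ' ^ 3 / ρ' ≤ C3 := by
    rw [hC3]
    apply div_le_div₀ (by positivity) _ hρ₀ hρ'l
    have h3 : θ' ^ 3 ≤ θ₁' ^ 3 := by
      apply pow_le_pow_left₀ (le_of_lt hθ'pos) hθ'u
    exact mul_le_mul_of_nonneg_left h3 (by positivity)
  have hrad'nn : 0 ≤ 4 * a / 3 * θ' ^ 3 / ρ' := by positivity
  have hradnn : 0 ≤ 4 * a / 3 * θ ^ 3 / ρ := by positivity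
  -- triangle inequality
  have habs : |(S Z + 4 * a / 3 * θ ^ 3 / ρ) - (S Z' + 4 * a / 3 * θ' ^ 3 / ρ')| ≤
      (S Z + 4 * a / 3 * θ ^ 3 / ρ) + (S Z' + 4 * a / 3 * θ' ^ 3 / ρ') := by
    have h1 : 0 ≤ S Z + 4 * a / 3 * θ ^ 3 / ρ := add_nonneg (hS0 Z hZpos) hradnn
    have h2 : 0 ≤ S Z' + 4 * a / 3 * θ' ^ 3 / ρ' := add_nonneg (hS0 Z' hZ'pos) hrad'nn
    rw [abs_sub_le_iff]
    constructor <;> linarith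
  have key : ρ * |(S Z + 4 * a / 3 * θ ^ 3 / ρ) - (S Z' + 4 * a / 3 * θ' ^ 3 / ρ')| ≤
      (S 1 + C2 + C3) * ρ + 9 * c / 4 * (ρ * max 0 (Real.log θ)) +
      3 * c / 2 * (ρ * |Real.log ρ|) + 4 * a / 3 * θ ^ 3 := by
    have hstep : ρ * |(S Z + 4 * a / 3 * θ ^ 3 / ρ) - (S Z' + 4 * a / 3 * θ' ^ 3 / ρ')| ≤
        ρ * ((S Z + 4 * a / 3 * θ ^ 3 / ρ) + (S Z' + 4 * a / 3 * θ' ^ 3 / ρ')) :=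
      mul_le_mul_of_nonneg_left habs (le_of_lt hρ)
    have hcancel : ρ * (4 * a / 3 * θ ^ 3 / ρ) = 4 * a / 3 * θ ^ 3 := by
      field_simp
    have h1 : ρ * S Z ≤ ρ * (S 1 + 3 * c / 2 * (3/2 * max 0 (Real.log θ) + |Real.log ρ|)) :=
      mul_le_mul_of_nonneg_left hSZ (le_of_lt hρ)
    have h2 : ρ * S Z' ≤ ρ * C2 := mul_le_mul_of_nonneg_left hSZ' (le_of_lt hρ)
    have h3 : ρ * (4 * a / 3 * θ' ^ 3 / ρ') ≤ ρ * C3 :=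
      mul_le_mul_of_nonneg_left hrad' (le_of_lt hρ)
    have hexp : ρ * ((S Z + 4 * a / 3 * θ ^ 3 / ρ) + (S Z' + 4 * a / 3 * θ' ^ 3 / ρ')) =
        ρ * S Z + ρ * (4 * a / 3 * θ ^ 3 / ρ) + ρ * S Z' + ρ * (4 * a / 3 * θ' ^ 3 / ρ') := by
      ring
    rw [hexp, hcancel] at hstep
    have h1' : ρ * (S 1 + 3 * c / 2 * (3/2 * max 0 (Real.log θ) + |Real.log ρ|)) =
        S 1 * ρ + 9 * c / 4 * (ρ * max 0 (Real.log θ)) + 3 * c / 2 * (ρ * |Real.log ρ|) := by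
      ring
    rw [h1'] at h1
    refine hstep.trans ?_
    have hsum := add_le_add (add_le_add (add_le_add h1 (le_refl (4 * a / 3 * θ ^ 3))) h2) h3
    refine hsum.trans_eq ?_
    ring
  have hgoal' : (4 * a / 3 : ℝ) * θ ^ 3 = 4 * a / 3 * θ ^ 3 := rfl
  -- finish: each coefficient ≤ ctil, all terms nonneg
  have hT1 : (0:ℝ) ≤ ρ := le_of_lt hρ
  have hT2 : (0:ℝ) ≤ ρ * max 0 (Real.log θ) := mul_nonneg hT1 (le_max_left _ _)
  have hT3 : (0:ℝ) ≤ ρ * |Real.log ρ| := mul_nonneg hT1 (abs_nonneg _)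
  have hT4 : (0:ℝ) ≤ θ ^ 3 := by positivity
  have hfix : (4 : ℝ) * a / 3 * θ ^ 3 / ρ = (4 * a / 3) * θ ^ 3 / ρ := by ring
  have hfix' : (4 : ℝ) * a / 3 * θ' ^ 3 / ρ' = (4 * a / 3) * θ' ^ 3 / ρ' := by ring
  calc ρ * |(S Z + 4 * a / 3 * θ ^ 3 / ρ) - (S Z' + 4 * a / 3 * θ' ^ 3 / ρ')|
      ≤ (S 1 + C2 + C3) * ρ + 9 * c / 4 * (ρ * max 0 (Real.log θ)) +
        3 * c / 2 * (ρ * |Real.log ρ|) + 4 * a / 3 * θ ^ 3 := key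
    _ ≤ (S 1 + 9 * c / 4 + 3 * c / 2 + C2 + C3 + 4 * a / 3 + 1) *
        (ρ + ρ * max 0 (Real.log θ) + ρ * |Real.log ρ| + θ ^ 3) := by
        set M : ℝ := S 1 + 9 * c / 4 + 3 * c / 2 + C2 + C3 + 4 * a / 3 + 1 with hM
        clear_value M
        have e1 : (S 1 + C2 + C3) * ρ ≤ M * ρ :=
          mul_le_mul_of_nonneg_right (by rw [hM]; linarith) hT1
        have e2 : 9 * c / 4 * (ρ * max 0 (Real.log θ)) ≤ M * (ρ * max 0 (Real.log θ)) :=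
          mul_le_mul_of_nonneg_right (by rw [hM]; linarith) hT2
        have e3 : 3 * c / 2 * (ρ * |Real.log ρ|) ≤ M * (ρ * |Real.log ρ|) :=
          mul_le_mul_of_nonneg_right (by rw [hM]; linarith) hT3
        have e4 : 4 * a / 3 * θ ^ 3 ≤ M * θ ^ 3 :=
          mul_le_mul_of_nonneg_right (by rw [hM]; linarith) hT4
        have hdist : M * (ρ + ρ * max 0 (Real.log θ) + ρ * |Real.log ρ| + θ ^ 3) =
            M * ρ + M * (ρ * max 0 (Real.log θ)) + M * (ρ * |Real.log ρ|) + M * θ ^ 3 := by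
          ring
        rw [hdist]
        linarith
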